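/- For every multiindex ν ∈ ℕ₀^d, ∑_{0 < m ≤ ν} C(ν,m) · |(1/2)_{|ν−m|}| · |(1/2)_{|m|}| ≤ 3 · |(1/2)_{|ν|}|, with equality if and only if |ν| ≥ 2. -/

import Mathlib

open Polynomial Finset

/-- The absolute value of the falling factorial `(1/2)_n`. -/
noncomputable def ff (n : ℕ) : ℝ := |(descPochhammer ℝ n).eval (1/2 : ℝ)|

noncomputable def PP (k : ℕ) : ℝ := (descPochhammer ℝ k).eval (1/2 : ℝ)

lemma smeval_desc (k : ℕ) (x : ℝ) :
    (descPochhammer ℤ k).smeval x = (descPochhammer ℝ k).eval x := by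
  rw [← eval₂_smulOneHom_eq_smeval,
    show (RingHom.smulOneHom : ℤ →+* ℝ) = Int.castRingHom ℝ from Subsingleton.elim _ _,
    ← eval_map, descPochhammer_map]

lemma vand (n : ℕ) :
    ∑ ij ∈ Finset.HasAntidiagonal.antidiagonal n, (n.choose ij.1 : ℝ) * (PP ij.1 * PP ij.2)
      = (descPochhammer ℝ n).eval 1 := by
  have h := Ring.descPochhammer_smeval_add (R := ℝ) (r := (1/2 : ℝ)) (s := (1/2 : ℝ)) n
    (Commute.all _ _)
  rw [show (1/2 : ℝ) + 1/2 = 1 by norm_num] at h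
  simp only [smeval_desc] at h
  rw [h]
  simp [PP]

lemma eval_one_zero {n : ℕ} (hn : 2 ≤ n) : (descPochhammer ℝ n).eval 1 = 0 := by
  obtain ⟨m, rfl⟩ := Nat.exists_eq_add_of_le hn
  rw [Nat.add_comm, descPochhammer_succ_left]
  simp [descPochhammer_ne_zero_eval_zero (R := ℝ) (Nat.succ_ne_zero _)]

lemma ff_zero : ff 0 = 1 := by simp [ff]

lemma ff_one : ff 1 = 1/2 := by
  simp [ff, descPochhammer_one]

lemma PP_succ (k : ℕ) : PP (k+1) = PP k * (1/2 - k) := by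
  simp [PP, descPochhammer_succ_eval]

lemma half_sub_ne (k : ℕ) : (1/2 : ℝ) - k ≠ 0 := by
  intro h
  have h2 : ((2*k : ℕ) : ℝ) = ((1 : ℕ) : ℝ) := by push_cast; linarith
  have h3 : 2*k = 1 := by exact_mod_cast h2
  omega

lemma ff_pos (k : ℕ) : 0 < ff k := by
  induction k with
  | zero => rw [ff_zero]; norm_num
  | succ k ih =>
    have : ff (k+1) = ff k * |(1/2 : ℝ) - k| := by
      rw [show ff (k+1) = |PP (k+1)| from rfl, PP_succ, abs_mul]; rfl
    rw [this]
    exact mul_pos ih (abs_pos.mpr (half_sub_ne k))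

lemma abs_PP (k : ℕ) : |PP k| = ff k := rfl

lemma PP_sign (k : ℕ) (hk : 1 ≤ k) : PP k = (-1)^(k-1) * ff k := by
  induction k with
  | zero => omega
  | succ k ih =>
    rcases Nat.eq_zero_or_pos k with rfl | hk1
    · have : PP 1 = 1/2 := by simp [PP, descPochhammer_one]
      rw [this, ff_one]; norm_num
    · have hs : (1/2 : ℝ) - k < 0 := by
        have : (1:ℝ) ≤ k := by exact_mod_cast hk1
        linarith
      have hffs : ff (k+1) = ff k * ((k:ℝ) - 1/2) := by
        rw [show ff (k+1) = |PP (k+1)| from rfl, PP_succ, abs_mul, abs_PP,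
          abs_of_neg hs]
        ring
      rw [PP_succ, ih hk1, hffs, show k + 1 - 1 = k from rfl,
        show (-1:ℝ)^k = (-1)^(k-1) * (-1) from by rw [← pow_succ, Nat.sub_add_cancel hk1]]
      ring

lemma PP_zero : PP 0 = 1 := by simp [PP]

lemma core (m : ℕ) :
    ∑ k ∈ Finset.range (m+3), (((m+2).choose k : ℝ)) * ff (m+2-k) * ff k
      = 4 * ff (m+2) := by
  set f : ℕ → ℝ := fun k => (((m+2).choose k : ℝ)) * ff (m+2-k) * ff k with hf
  set g : ℕ → ℝ := fun k => (((m+2).choose k : ℝ)) * (PP k * PP (m+2-k)) with hg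
  have hV : ∑ k ∈ Finset.range (m+3), g k = 0 := by
    have h := vand (m+2)
    rw [Finset.Nat.sum_antidiagonal_eq_sum_range_succ_mk] at h
    exact h.trans (eval_one_zero (by omega))
  have e1 : ∑ k ∈ Finset.range (m+3), f k
      = ((∑ k ∈ Finset.range (m+1), f (k+1)) + f 0) + f (m+2) := by
    rw [Finset.sum_range_succ, Finset.sum_range_succ']
  have e2 : ∑ k ∈ Finset.range (m+3), g k
      = ((∑ k ∈ Finset.range (m+1), g (k+1)) + g 0) + g (m+2) := by
    rw [Finset.sum_range_succ, Finset.sum_range_succ']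
  have hmid : ∑ k ∈ Finset.range (m+1), f (k+1)
      = (-1:ℝ)^m * ∑ k ∈ Finset.range (m+1), g (k+1) := by
    rw [Finset.mul_sum]
    refine Finset.sum_congr rfl fun k hk => ?_
    have hkm : k ≤ m := by simpa [Nat.lt_succ_iff] using hk
    have hsub : m + 2 - (k+1) = m + 1 - k := by omega
    have h1 : PP (k+1) = (-1:ℝ)^k * ff (k+1) := by
      have := PP_sign (k+1) (by omega); simpa using this
    have h2 : PP (m+1-k) = (-1:ℝ)^(m-k) * ff (m+1-k) := by
      have := PP_sign (m+1-k) (by omega)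
      rwa [show m+1-k-1 = m-k by omega] at this
    have hpow : (-1:ℝ)^k * (-1)^(m-k) = (-1)^m := by
      rw [← pow_add, show k + (m-k) = m by omega]
    have hsq : (-1:ℝ)^m * (-1)^m = 1 := by
      rw [← pow_add, ← two_mul, pow_mul]; norm_num
    rw [hf, hg]
    simp only [hsub, h1, h2]
    linear_combination (-(-1:ℝ)^m * ((((m + 2).choose (k + 1) : ℕ) : ℝ) * ff (k + 1) * ff (m + 1 - k))) * hpow
      - ((((m + 2).choose (k + 1) : ℕ) : ℝ) * ff (k + 1) * ff (m + 1 - k)) * hsq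
  have hg0 : g 0 = PP (m+2) := by simp [hg, PP_zero]
  have hgt : g (m+2) = PP (m+2) := by simp [hg, PP_zero]
  have hf0 : f 0 = ff (m+2) := by simp [hf, ff_zero]
  have hft : f (m+2) = ff (m+2) := by simp [hf, ff_zero]
  have hsumg : ∑ k ∈ Finset.range (m+1), g (k+1) = -2 * PP (m+2) := by
    rw [e2, hg0, hgt] at hV; linarith
  have hPPn : PP (m+2) = (-1:ℝ)^(m+1) * ff (m+2) := by
    have := PP_sign (m+2) (by omega); simpa using this
  have hodd : (-1:ℝ)^m * (-1)^(m+1) = -1 := by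
    rw [← pow_add, show m + (m+1) = 2*m+1 by ring, pow_succ, pow_mul]; norm_num
  rw [e1, hmid, hsumg, hf0, hft, hPPn]
  linear_combination (-2 * ff (m+2)) * hodd

lemma binstep (p q : ℕ) (F : ℕ → ℝ) :
    ∑ a ∈ Finset.range (p+1), ∑ b ∈ Finset.range (q+1),
      (p.choose a : ℝ) * (q.choose b : ℝ) * F (a+b)
    = ∑ k ∈ Finset.range (p+q+1), ((p+q).choose k : ℝ) * F k := by
  rw [← Finset.sum_product']
  have hmaps : ∀ x ∈ Finset.range (p+1) ×ˢ Finset.range (q+1),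
      x.1 + x.2 ∈ Finset.range (p+q+1) := by
    intro x hx
    rw [Finset.mem_product, Finset.mem_range, Finset.mem_range] at hx
    rw [Finset.mem_range]; omega
  rw [← Finset.sum_fiberwise_of_maps_to hmaps]
  refine Finset.sum_congr rfl fun k hk => ?_
  have hterm : ∀ x ∈ (Finset.range (p+1) ×ˢ Finset.range (q+1)).filter
      (fun x => x.1 + x.2 = k),
      (p.choose x.1 : ℝ) * (q.choose x.2 : ℝ) * F (x.1 + x.2)
        = (p.choose x.1 : ℝ) * (q.choose x.2 : ℝ) * F k := by
    intro x hx
    rw [Finset.mem_filter] at hx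
    rw [hx.2]
  rw [Finset.sum_congr rfl hterm, ← Finset.sum_mul]
  congr 1
  have hsub : (Finset.range (p+1) ×ˢ Finset.range (q+1)).filter
      (fun x => x.1 + x.2 = k) ⊆ Finset.HasAntidiagonal.antidiagonal k := by
    intro x hx
    rw [Finset.mem_filter] at hx
    rw [Finset.HasAntidiagonal.mem_antidiagonal]
    exact hx.2
  have hzero : ∀ x ∈ Finset.HasAntidiagonal.antidiagonal k,
      x ∉ (Finset.range (p+1) ×ˢ Finset.range (q+1)).filter (fun x => x.1 + x.2 = k) →
      (p.choose x.1 : ℝ) * (q.choose x.2 : ℝ) = 0 := by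
    intro x hx hnx
    rw [Finset.HasAntidiagonal.mem_antidiagonal] at hx
    rw [Finset.mem_filter, Finset.mem_product, Finset.mem_range, Finset.mem_range] at hnx
    push_neg at hnx
    by_cases h1 : x.1 < p + 1
    · by_cases h2 : x.2 < q + 1
      · exact absurd hx (hnx ⟨h1, h2⟩)
      · have : q < x.2 := by omega
        rw [Nat.choose_eq_zero_of_lt this]; simp
    · have : p < x.1 := by omega
      rw [Nat.choose_eq_zero_of_lt this]; simp
  rw [Finset.sum_subset hsub hzero]
  rw [Nat.add_choose_eq]
  push_cast
  rfl

lemma key (d : ℕ) (ν : Fin d → ℕ) (F : ℕ → ℝ) :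
    ∑ m ∈ Fintype.piFinset (fun j => Finset.range (ν j + 1)),
      (∏ j, ((ν j).choose (m j) : ℝ)) * F (∑ j, m j)
    = ∑ k ∈ Finset.range ((∑ j, ν j) + 1), (((∑ j, ν j).choose k : ℝ)) * F k := by
  induction d generalizing F with
  | zero => simp
  | succ d ih =>
    have hbij : ∑ m ∈ Fintype.piFinset (fun j : Fin (d+1) => Finset.range (ν j + 1)),
        (∏ j, ((ν j).choose (m j) : ℝ)) * F (∑ j, m j)
      = ∑ x ∈ Finset.range (ν 0 + 1) ×ˢ
          Fintype.piFinset (fun j : Fin d => Finset.range (ν j.succ + 1)),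
        (∏ j, ((ν j).choose ((Fin.cons x.1 x.2 : ∀ _ : Fin (d+1), ℕ) j) : ℝ))
          * F (∑ j, (Fin.cons x.1 x.2 : ∀ _ : Fin (d+1), ℕ) j) := by
      refine Finset.sum_nbij' (i := fun m => (m 0, fun j : Fin d => m j.succ))
        (j := fun x => Fin.cons x.1 x.2) ?_ ?_ ?_ ?_ ?_
      · intro m hm
        rw [Fintype.mem_piFinset] at hm
        rw [Finset.mem_product, Fintype.mem_piFinset]
        exact ⟨hm 0, fun j => hm j.succ⟩
      · intro x hx
        rw [Finset.mem_product, Fintype.mem_piFinset] at hx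
        rw [Fintype.mem_piFinset]
        intro j
        refine Fin.cases ?_ ?_ j
        · simpa using hx.1
        · intro i; simpa using hx.2 i
      · intro m _; exact Fin.cons_self_tail m
      · intro x _; simp
      · intro m _
        have hm : (Fin.cons (m 0) (fun j : Fin d => m j.succ) : ∀ _ : Fin (d+1), ℕ) = m := by
          funext j
          refine Fin.cases ?_ ?_ j
          · rw [Fin.cons_zero]
          · intro i; rw [Fin.cons_succ]
        simp only
        rw [hm]
    rw [hbij, Finset.sum_product]
    have hinner : ∀ a ∈ Finset.range (ν 0 + 1),
        ∑ m ∈ Fintype.piFinset (fun j : Fin d => Finset.range (ν j.succ + 1)),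
          (∏ j, ((ν j).choose ((Fin.cons a m : ∀ _ : Fin (d+1), ℕ) j) : ℝ))
            * F (∑ j, (Fin.cons a m : ∀ _ : Fin (d+1), ℕ) j)
        = ∑ k ∈ Finset.range ((∑ j : Fin d, ν j.succ) + 1),
            ((ν 0).choose a : ℝ) * (((∑ j : Fin d, ν j.succ).choose k : ℝ)) * F (a + k) := by
      intro a _
      have : ∀ m ∈ Fintype.piFinset (fun j : Fin d => Finset.range (ν j.succ + 1)),
          (∏ j, ((ν j).choose ((Fin.cons a m : ∀ _ : Fin (d+1), ℕ) j) : ℝ))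
            * F (∑ j, (Fin.cons a m : ∀ _ : Fin (d+1), ℕ) j)
          = ((ν 0).choose a : ℝ) *
            ((∏ j, ((ν j.succ).choose (m j) : ℝ)) * (fun s => F (a + s)) (∑ j, m j)) := by
        intro m _
        rw [Fin.prod_univ_succ, Fin.sum_univ_succ]
        simp only [Fin.cons_zero, Fin.cons_succ]
        ring_nf
      rw [Finset.sum_congr rfl this, ← Finset.mul_sum,
        ih (fun j => ν j.succ) (fun s => F (a + s)), Finset.mul_sum]
      exact Finset.sum_congr rfl fun k _ => by ring
    rw [Finset.sum_congr rfl hinner]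
    rw [binstep (ν 0) (∑ j : Fin d, ν j.succ) F]
    rw [Fin.sum_univ_succ]

theorem stmt12 (d : ℕ) (ν : Fin d → ℕ) :
    (∑ m ∈ (Fintype.piFinset fun j => Finset.range (ν j + 1)).filter (fun m => m ≠ 0),
        (∏ j, ((ν j).choose (m j) : ℝ)) * ff (∑ j, (ν j - m j)) * ff (∑ j, m j)
      ≤ 3 * ff (∑ j, ν j)) ∧
    ((∑ m ∈ (Fintype.piFinset fun j => Finset.range (ν j + 1)).filter (fun m => m ≠ 0),
        (∏ j, ((ν j).choose (m j) : ℝ)) * ff (∑ j, (ν j - m j)) * ff (∑ j, m j)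
      = 3 * ff (∑ j, ν j)) ↔ 2 ≤ ∑ j, ν j) := by
  set n := ∑ j, ν j with hn
  have hS : (∑ m ∈ (Fintype.piFinset fun j => Finset.range (ν j + 1)).filter (fun m => m ≠ 0),
        (∏ j, ((ν j).choose (m j) : ℝ)) * ff (∑ j, (ν j - m j)) * ff (∑ j, m j))
      = (∑ k ∈ Finset.range (n+1), ((n.choose k : ℝ)) * (ff (n-k) * ff k)) - ff n := by
    have h0 : (0 : Fin d → ℕ) ∈ Fintype.piFinset (fun j => Finset.range (ν j + 1)) := by
      rw [Fintype.mem_piFinset]; intro j; simp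
    rw [Finset.filter_ne', Finset.sum_erase_eq_sub h0]
    congr 1
    · rw [hn, ← key d ν (fun k => ff ((∑ j, ν j) - k) * ff k)]
      refine Finset.sum_congr rfl fun m hm => ?_
      rw [Fintype.mem_piFinset] at hm
      have hle : ∀ j, m j ≤ ν j := fun j => by
        have := hm j; rw [Finset.mem_range] at this; omega
      have hsub : ∑ j, (ν j - m j) = (∑ j, ν j) - ∑ j, m j :=
        Finset.sum_tsub_distrib Finset.univ (fun j _ => hle j)
      rw [hsub, mul_assoc]
    · simp [ff_zero, hn]
  rw [hS]
  rcases n with _ | _ | m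
  · norm_num [ff_zero]
  · have : ∑ k ∈ Finset.range 2, (((1:ℕ).choose k : ℝ)) * (ff (1-k) * ff k) = 1 := by
      rw [Finset.sum_range_succ, Finset.sum_range_succ]
      norm_num [ff_zero, ff_one]
    rw [this, ff_one]
    norm_num
  · have hc : ∑ k ∈ Finset.range (m+3), (((m+2).choose k : ℝ)) * (ff (m+2-k) * ff k)
        = 4 * ff (m+2) := by
      rw [← core m]
      exact Finset.sum_congr rfl fun k _ => by ring
    rw [hc]
    constructor
    · linarith [ff_pos (m+2)]
    · constructor
      · intro _; omega
      · intro _; ring
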